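/- Let U be an open convex subset of X and f ∈ C^{1u}(U, Y). If the derivative f′ : U → C_p(X,Y) is weakly p-sequentially continuous (i.e., f′ takes U-bounded weakly p-Cauchy sequences in U into norm convergent sequences in L(X,Y), with values in the p-convergent operators), then f is weakly p-sequentially continuous. -/

import Mathlib

open Filter Topology Metric Set
open scoped ENNReal NNReal

section Defs

variable {X Y : Type*} [NormedAddCommGroup X] [NormedSpace ℝ X]
  [NormedAddCommGroup Y] [NormedSpace ℝ Y]

/-- A sequence `(x n)` in `X` is weakly `p`-summable if `(f (x n))ₙ ∈ ℓ_p` for every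
continuous linear functional `f` (for `p = ∞`, this means `(f (x n))ₙ ∈ c₀`). -/
def WeaklyLpSummable (p : ℝ≥0∞) (x : ℕ → X) : Prop :=
  ∀ f : X →L[ℝ] ℝ,
    if p = ⊤ then Filter.Tendsto (fun n => f (x n)) Filter.atTop (nhds 0)
    else Memℓp (fun n => f (x n)) p

/-- A sequence is weakly `p`-Cauchy if all difference sequences along pairs of strictly
monotone index sequences are weakly `p`-summable. -/
def WeaklyLpCauchy (p : ℝ≥0∞) (x : ℕ → X) : Prop :=
  ∀ m k : ℕ → ℕ, StrictMono m → StrictMono k →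
    WeaklyLpSummable p (fun i => x (m i) - x (k i))

/-- `(x n)` is weakly `p`-convergent to `x₀` if `(x n - x₀)` is weakly `p`-summable. -/
def WeaklyLpConvergentTo (p : ℝ≥0∞) (x : ℕ → X) (x₀ : X) : Prop :=
  WeaklyLpSummable p (fun n => x n - x₀)

/-- A set `K ⊆ L(X,Y)` is uniformly `p`-convergent if `lim_n sup_{T ∈ K} ‖T (x n)‖ = 0`
for every weakly `p`-summable sequence `(x n)`. -/
def UniformlyPConvergent (p : ℝ≥0∞) (K : Set (X →L[ℝ] Y)) : Prop :=
  ∀ x : ℕ → X, WeaklyLpSummable p x →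
    ∀ ε > 0, ∃ N : ℕ, ∀ n ≥ N, ∀ T ∈ K, ‖T (x n)‖ < ε

/-- `B` is `U`-bounded: contained in `U`, bounded, and at positive distance from `∂U`. -/
def UBounded (U B : Set X) : Prop :=
  B ⊆ U ∧ Bornology.IsBounded B ∧ ∃ r > 0, ∀ b ∈ B, Metric.ball b r ⊆ U

/-- A sequence is `U`-bounded if its range is a `U`-bounded set. -/
def UBoundedSeq (U : Set X) (x : ℕ → X) : Prop :=
  UBounded U (Set.range x)

/-- `f ∈ C^{1u}(U,Y)`: `f` is differentiable on `U` with derivative `f'` which is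
uniformly continuous on `U`-bounded subsets of `U`. -/
def C1u (U : Set X) (f : X → Y) (f' : X → X →L[ℝ] Y) : Prop :=
  (∀ x ∈ U, HasFDerivAt f (f' x) x) ∧
  ∀ B : Set X, UBounded U B → UniformContinuousOn f' B

/-- `T` is a `p`-convergent operator: it maps weakly `p`-summable sequences to norm-null
sequences. -/
def PConvergentOp (p : ℝ≥0∞) (T : X →L[ℝ] Y) : Prop :=
  ∀ x : ℕ → X, WeaklyLpSummable p x →
    Filter.Tendsto (fun n => ‖T (x n)‖) Filter.atTop (nhds 0)

/-- `f` is weakly `p`-sequentially continuous on `U`: it maps `U`-bounded weakly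
`p`-Cauchy sequences to norm convergent sequences. -/
def WeaklyPSeqCont (p : ℝ≥0∞) (U : Set X) (f : X → Y) : Prop :=
  ∀ x : ℕ → X, UBoundedSeq U x → WeaklyLpCauchy p x →
    ∃ l : Y, Filter.Tendsto (fun n => f (x n)) Filter.atTop (nhds l)

/-- `K` is weakly `p`-precompact: every sequence in `K` has a weakly `p`-Cauchy
subsequence. -/
def WeaklyPPrecompact (p : ℝ≥0∞) (K : Set X) : Prop :=
  ∀ x : ℕ → X, (∀ n, x n ∈ K) →
    ∃ m : ℕ → ℕ, StrictMono m ∧ WeaklyLpCauchy p (fun i => x (m i))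

end Defs

section Aux

variable {X : Type*} [NormedAddCommGroup X] [NormedSpace ℝ X]

lemma wls_add {p : ℝ≥0∞} {u v : ℕ → X} (hu : WeaklyLpSummable p u)
    (hv : WeaklyLpSummable p v) : WeaklyLpSummable p (fun n => u n + v n) := by
  intro g
  have hu' := hu g
  have hv' := hv g
  by_cases his : p = ⊤
  · simp only [his, if_true] at *
    simpa [map_add] using hu'.add hv'
  · simp only [his, if_false] at *
    have heq : (fun n => g (u n + v n)) = (fun n => g (u n)) + fun n => g (v n) := by
      funext n; simp [map_add]
    rw [heq]; exact hu'.add hv'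

lemma wls_smul {p : ℝ≥0∞} (c : ℝ) {u : ℕ → X} (hu : WeaklyLpSummable p u) :
    WeaklyLpSummable p (fun n => c • u n) := by
  intro g
  have hu' := hu g
  by_cases his : p = ⊤
  · simp only [his, if_true] at *
    have := hu'.const_mul c
    simpa [map_smul, smul_eq_mul] using this
  · simp only [his, if_false] at *
    have := hu'.const_smul c
    have heq : (fun n => g (c • u n)) = c • fun n => g (u n) := by
      funext n; simp [map_smul, smul_eq_mul]
    rw [heq]; exact this

lemma wls_sub {p : ℝ≥0∞} {u v : ℕ → X} (hu : WeaklyLpSummable p u)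
    (hv : WeaklyLpSummable p v) : WeaklyLpSummable p (fun n => u n - v n) := by
  have := wls_add hu (wls_smul (-1) hv)
  simpa [sub_eq_add_neg] using this

lemma ubounded_mono {U B B' : Set X} (h : UBounded U B) (hsub : B' ⊆ B) : UBounded U B' := by
  obtain ⟨h1, h2, r, hr, h3⟩ := h
  exact ⟨hsub.trans h1, h2.subset hsub, r, hr, fun b hb => h3 b (hsub hb)⟩

lemma ubounded_convexHull {U B : Set X} (hUc : Convex ℝ U) (hB : UBounded U B) :
    UBounded U (convexHull ℝ B) := by
  obtain ⟨hBU, hBb, r, hr, hball⟩ := hB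
  have hV : Convex ℝ {b : X | Metric.ball b r ⊆ U} := by
    intro b₁ h₁ b₂ h₂ s t hs ht hst y hy
    simp only [Metric.mem_ball, dist_eq_norm] at hy
    have hu₁ : b₁ + (y - (s • b₁ + t • b₂)) ∈ U := by
      apply h₁; simp only [Metric.mem_ball, dist_eq_norm]; simpa using hy
    have hu₂ : b₂ + (y - (s • b₁ + t • b₂)) ∈ U := by
      apply h₂; simp only [Metric.mem_ball, dist_eq_norm]; simpa using hy
    have hyeq : s • (b₁ + (y - (s • b₁ + t • b₂))) + t • (b₂ + (y - (s • b₁ + t • b₂))) = y := by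
      have ht' : t = 1 - s := by linarith
      subst ht'; module
    have := hUc hu₁ hu₂ hs ht hst
    rwa [hyeq] at this
  have hsubV : convexHull ℝ B ⊆ {b : X | Metric.ball b r ⊆ U} :=
    convexHull_min (fun b hb => hball b hb) hV
  exact ⟨convexHull_min hBU hUc, isBounded_convexHull.mpr hBb, r, hr, fun b hb => hsubV hb⟩

end Aux


/-- If `f ∈ C^{1u}(U,Y)` and `f'` is weakly `p`-sequentially continuous with values in
the `p`-convergent operators, then `f` is weakly `p`-sequentially continuous. -/
theorem deriv_weaklyPSeqCont_imp_weaklyPSeqCont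
    {X Y : Type*} [NormedAddCommGroup X] [NormedSpace ℝ X] [CompleteSpace X]
    [NormedAddCommGroup Y] [NormedSpace ℝ Y] [CompleteSpace Y]
    (p : ℝ≥0∞) (hp : 1 ≤ p)
    (U : Set X) (hU : IsOpen U) (hUc : Convex ℝ U)
    (f : X → Y) (f' : X → X →L[ℝ] Y) (hf : C1u U f f')
    (hvals : ∀ x ∈ U, PConvergentOp p (f' x))
    (hseq : ∀ x : ℕ → X, UBoundedSeq U x → WeaklyLpCauchy p x →
      ∃ T : X →L[ℝ] Y, PConvergentOp p T ∧
        Filter.Tendsto (fun n => f' (x n)) Filter.atTop (nhds T)) :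
    WeaklyPSeqCont p U f := by
  intro x hxU hxC
  suffices h : CauchySeq (fun n => f (x n)) from cauchySeq_tendsto_of_complete h
  rw [Metric.cauchySeq_iff]
  by_contra hcon
  push_neg at hcon
  obtain ⟨ε, hε, H⟩ := hcon
  choose m' hm' n' hn' hdist using H
  let g : ℕ → ℕ := fun i =>
    Nat.rec (motive := fun _ => ℕ) 0 (fun _ gi => max (m' gi) (n' gi) + 1) i
  set a : ℕ → ℕ := fun i => m' (g i) with ha_def
  set b : ℕ → ℕ := fun i => n' (g i) with hb_def
  have hg : ∀ i, g (i + 1) = max (a i) (b i) + 1 := fun i => rfl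
  have haS : StrictMono a := by
    apply strictMono_nat_of_lt_succ
    intro i
    have h1 : g (i + 1) ≤ m' (g (i + 1)) := hm' _
    have h2 : a i < g (i + 1) := by
      rw [hg]; exact Nat.lt_succ_of_le (le_max_left _ _)
    exact lt_of_lt_of_le h2 h1
  have hbS : StrictMono b := by
    apply strictMono_nat_of_lt_succ
    intro i
    have h1 : g (i + 1) ≤ n' (g (i + 1)) := hn' _
    have h2 : b i < g (i + 1) := by
      rw [hg]; exact Nat.lt_succ_of_le (le_max_right _ _)
    exact lt_of_lt_of_le h2 h1
  set d : ℕ → X := fun i => x (a i) - x (b i) with hd_def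
  have hdW : WeaklyLpSummable p d := hxC a b haS hbS
  have hxU' : UBounded U (Set.range x) := hxU
  obtain ⟨R, hR⟩ := isBounded_iff_forall_norm_le.mp hxU'.2.1
  have hRx : ∀ n, ‖x n‖ ≤ R := fun n => hR _ (mem_range_self n)
  set D : ℝ := 2 * R + 1 with hD_def
  have hD0 : 0 < D := by
    have : (0:ℝ) ≤ R := le_trans (norm_nonneg _) (hRx 0)
    rw [hD_def]; linarith
  have hdD : ∀ i, ‖d i‖ ≤ D := by
    intro i
    calc ‖d i‖ ≤ ‖x (a i)‖ + ‖x (b i)‖ := norm_sub_le _ _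
    _ ≤ R + R := add_le_add (hRx _) (hRx _)
    _ ≤ D := by rw [hD_def]; linarith
  set B : Set X := convexHull ℝ (Set.range x) with hB_def
  have hBU : UBounded U B := ubounded_convexHull hUc hxU'
  have hBsubU : B ⊆ U := hBU.1
  have hBconv : Convex ℝ B := convex_convexHull ℝ _
  have hxB : ∀ n, x n ∈ B := fun n => subset_convexHull ℝ _ (mem_range_self n)
  have hmemB : ∀ c : ℝ, c ∈ Set.Icc (0:ℝ) 1 → ∀ i, x (b i) + c • d i ∈ B := by
    intro c hc i
    have heq : x (b i) + c • d i = (1 - c) • x (b i) + c • x (a i) := by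
      rw [hd_def]; module
    rw [heq]
    exact hBconv (hxB (b i)) (hxB (a i)) (by linarith [hc.2]) hc.1 (by ring)
  have hUC := hf.2 B hBU
  rw [Metric.uniformContinuousOn_iff] at hUC
  set ε' : ℝ := ε / 2 with hε'_def
  have hε'0 : 0 < ε' := by rw [hε'_def]; positivity
  obtain ⟨δ, hδ0, hδ⟩ := hUC (ε' / (3 * D)) (by positivity)
  obtain ⟨M, hM⟩ := exists_nat_gt (D / δ)
  have hM0 : 0 < (M:ℝ) := lt_trans (by positivity) hM
  have hDM : D / (M:ℝ) < δ := by
    rw [div_lt_iff₀ hM0, mul_comm]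
    exact (div_lt_iff₀ hδ0).mp hM
  have hQ : ∀ j ∈ Finset.range (M + 1), ∀ᶠ i in atTop,
      ‖(f' (x (b i) + ((j:ℝ)/(M:ℝ)) • d i)) (d i)‖ ≤ 2 * ε' / 3 := by
    intro j hj
    rw [Finset.mem_range, Nat.lt_succ_iff] at hj
    set c : ℝ := (j:ℝ) / (M:ℝ) with hc_def
    have hc01 : c ∈ Set.Icc (0:ℝ) 1 := by
      constructor
      · rw [hc_def]; positivity
      · rw [hc_def, div_le_one hM0]; exact_mod_cast hj
    set ξ : ℕ → X := fun i => x (b i) + c • d i with hξ_def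
    have hξB : ∀ i, ξ i ∈ B := fun i => hmemB c hc01 i
    have hξU : UBoundedSeq U ξ := ubounded_mono hBU (range_subset_iff.mpr hξB)
    have hξC : WeaklyLpCauchy p ξ := by
      intro m k hm hk
      have h1 : WeaklyLpSummable p (fun i => x (b (m i)) - x (b (k i))) :=
        hxC (fun i => b (m i)) (fun i => b (k i)) (hbS.comp hm) (hbS.comp hk)
      have h2 : WeaklyLpSummable p (fun i => x (a (m i)) - x (a (k i))) :=
        hxC (fun i => a (m i)) (fun i => a (k i)) (haS.comp hm) (haS.comp hk)
      have h3 := wls_add h1 (wls_smul c (wls_sub h2 h1))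
      have heq : (fun i => ξ (m i) - ξ (k i)) =
          fun i => (x (b (m i)) - x (b (k i))) +
            c • ((x (a (m i)) - x (a (k i))) - (x (b (m i)) - x (b (k i)))) := by
        funext i
        simp only [hξ_def, hd_def]
        module
      rw [heq]; exact h3
    obtain ⟨T, hTpc, hTconv⟩ := hseq ξ hξU hξC
    have h4 : ∀ᶠ i in atTop, ‖f' (ξ i) - T‖ < ε' / (3 * D) := by
      have := tendsto_iff_norm_sub_tendsto_zero.mp hTconv
      exact this.eventually_lt_const (by positivity)
    have h5 : ∀ᶠ i in atTop, ‖T (d i)‖ < ε' / 3 :=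
      (hTpc d hdW).eventually_lt_const (by positivity)
    filter_upwards [h4, h5] with i h4i h5i
    have hsplit : ‖(f' (ξ i)) (d i)‖ ≤ ‖(f' (ξ i) - T) (d i)‖ + ‖T (d i)‖ := by
      have e : (f' (ξ i)) (d i) = (f' (ξ i) - T) (d i) + T (d i) := by simp
      rw [e]; exact norm_add_le _ _
    have h6 : ‖(f' (ξ i) - T) (d i)‖ ≤ ‖f' (ξ i) - T‖ * ‖d i‖ :=
      (f' (ξ i) - T).le_opNorm _
    have h7 : ‖f' (ξ i) - T‖ * ‖d i‖ ≤ (ε' / (3 * D)) * D :=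
      mul_le_mul h4i.le (hdD i) (norm_nonneg _) (by positivity)
    have h8 : (ε' / (3 * D)) * D = ε' / 3 := by field_simp
    linarith
  rw [← Filter.eventually_all_finset] at hQ
  obtain ⟨i, hi⟩ := hQ.exists
  have hkey : ∀ t ∈ Set.Icc (0:ℝ) 1, ‖(f' (x (b i) + t • d i)) (d i)‖ ≤ ε' := by
    intro t ht
    set j : ℕ := ⌊t * M⌋₊ with hj_def
    have htM0 : 0 ≤ t * M := mul_nonneg ht.1 hM0.le
    have hj1 : (j:ℝ) ≤ t * M := Nat.floor_le htM0
    have hj2 : t * M < (j:ℝ) + 1 := Nat.lt_floor_add_one _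
    have hjM : j ≤ M := by
      have h1 : (j:ℝ) ≤ (M:ℝ) := le_trans hj1 (by nlinarith [ht.2, hM0.le])
      exact_mod_cast h1
    have hjmem : j ∈ Finset.range (M + 1) := Finset.mem_range.mpr (Nat.lt_succ_of_le hjM)
    have hgrid := hi j hjmem
    have h1 : (j:ℝ) / M ≤ t := by rw [div_le_iff₀ hM0]; exact hj1
    have h2 : t - (j:ℝ) / M < 1 / M := by
      rw [sub_lt_iff_lt_add, ← add_div, lt_div_iff₀ hM0]
      linarith
    have hptdist : ‖(x (b i) + t • d i) - (x (b i) + ((j:ℝ)/(M:ℝ)) • d i)‖ < δ := by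
      have e : (x (b i) + t • d i) - (x (b i) + ((j:ℝ)/(M:ℝ)) • d i)
          = (t - (j:ℝ)/(M:ℝ)) • d i := by module
      rw [e, norm_smul, Real.norm_eq_abs, abs_of_nonneg (by linarith : (0:ℝ) ≤ t - (j:ℝ)/(M:ℝ))]
      calc (t - (j:ℝ)/(M:ℝ)) * ‖d i‖ ≤ (t - (j:ℝ)/(M:ℝ)) * D :=
            mul_le_mul_of_nonneg_left (hdD i) (by linarith)
        _ < (1 / M) * D := by
            apply mul_lt_mul_of_pos_right h2 hD0
        _ = D / M := by ring
        _ < δ := hDM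
    have hξtB : x (b i) + t • d i ∈ B := hmemB t ht i
    have hξjB : x (b i) + ((j:ℝ)/(M:ℝ)) • d i ∈ B := by
      refine hmemB _ ⟨by positivity, ?_⟩ i
      rw [div_le_one hM0]; exact_mod_cast hjM
    have hUCi := hδ _ hξtB _ hξjB (by rwa [dist_eq_norm])
    rw [dist_eq_norm] at hUCi
    have hsplit : ‖(f' (x (b i) + t • d i)) (d i)‖ ≤
        ‖f' (x (b i) + t • d i) - f' (x (b i) + ((j:ℝ)/(M:ℝ)) • d i)‖ * ‖d i‖ +
        ‖(f' (x (b i) + ((j:ℝ)/(M:ℝ)) • d i)) (d i)‖ := by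
      have e : (f' (x (b i) + t • d i)) (d i) =
          (f' (x (b i) + t • d i) - f' (x (b i) + ((j:ℝ)/(M:ℝ)) • d i)) (d i) +
          (f' (x (b i) + ((j:ℝ)/(M:ℝ)) • d i)) (d i) := by simp
      rw [e]
      exact le_trans (norm_add_le _ _)
        (add_le_add_left (ContinuousLinearMap.le_opNorm _ _) _)
    have hterm : ‖f' (x (b i) + t • d i) - f' (x (b i) + ((j:ℝ)/(M:ℝ)) • d i)‖ * ‖d i‖
        ≤ (ε' / (3 * D)) * D :=
      mul_le_mul hUCi.le (hdD i) (norm_nonneg _) (by positivity)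
    have h8 : (ε' / (3 * D)) * D = ε' / 3 := by field_simp
    linarith
  have hMVT : ‖f (x (b i) + (1:ℝ) • d i) - f (x (b i) + (0:ℝ) • d i)‖ ≤ ε' * ‖(1:ℝ) - 0‖ := by
    refine Convex.norm_image_sub_le_of_norm_hasDerivWithin_le
      (f := fun t : ℝ => f (x (b i) + t • d i))
      (f' := fun t : ℝ => (f' (x (b i) + t • d i)) (d i)) ?_ ?_ (convex_Icc 0 1)
      (left_mem_Icc.mpr zero_le_one) (right_mem_Icc.mpr zero_le_one)
    · intro t ht
      have hmem : x (b i) + t • d i ∈ U := hBsubU (hmemB t ht i)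
      have hF : HasFDerivAt f (f' (x (b i) + t • d i)) (x (b i) + t • d i) := hf.1 _ hmem
      have hg' : HasDerivAt (fun s : ℝ => x (b i) + s • d i) (d i) t := by
        have h1 : HasDerivAt (fun s : ℝ => s • d i) ((1:ℝ) • d i) t :=
          (hasDerivAt_id t).smul_const (d i)
        simpa using h1.const_add (x (b i))
      exact (hF.comp_hasDerivAt t hg').hasDerivWithinAt
    · intro t ht
      exact hkey t ht
  have e1 : x (b i) + (1:ℝ) • d i = x (a i) := by
    simp only [hd_def, one_smul]; abel
  have e0 : x (b i) + (0:ℝ) • d i = x (b i) := by simp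
  rw [e1, e0] at hMVT
  have hle : dist (f (x (a i))) (f (x (b i))) ≤ ε' := by
    rw [dist_eq_norm]
    calc ‖f (x (a i)) - f (x (b i))‖ ≤ ε' * ‖(1:ℝ) - 0‖ := hMVT
    _ = ε' := by simp
  have hεa : ε ≤ dist (f (x (a i))) (f (x (b i))) := hdist (g i)
  rw [hε'_def] at hle
  linarith
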